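/- arXiv:1201.6459 — 7 statements merged into one kernel-verified Lean document; each statement's English description precedes it below -/
import Mathlib

section
/- Let F be a field, let n, β, m be natural numbers, let D be a subset of Fin n, and let G be a matrix in Matrix (Fin n ⊕ Fin β) (Fin m) F. Then the following are equivalent: (i) for every x : Fin n → F and every z : Fin β → F such that x d ≠ 0 for some d ∈ D, the row vector Matrix.vecMul (Sum.elim x z) G is nonzero; (ii) for every d ∈ D, the standard basis vector Pi.single (Sum.inl d) (1 : F) of the space (Fin n ⊕ Fin β) → F lies in the F-linear span of the set of columns of G (the vectors fun i => G i c, for c : Fin m). -/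
private lemma dot_span_iff {F : Type*} [Field F] {ι : Type*} [Fintype ι] [DecidableEq ι]
    (S : Set (ι → F)) (v : ι → F) :
    v ∈ Submodule.span F S ↔
      ∀ y : ι → F, (∀ s ∈ S, dotProduct y s = 0) → dotProduct y v = 0 := by
  constructor
  · intro hv y hy
    induction hv using Submodule.span_induction with
    | mem s hs => exact hy s hs
    | zero => simp
    | add a b _ _ ha hb => simp [dotProduct_add, ha, hb]
    | smul c a _ ha => simp [dotProduct_smul, ha]
  · intro h
    by_contra hv
    set W := Submodule.span F S with hW
    have hq : (Submodule.Quotient.mk v : (ι → F) ⧸ W) ≠ 0 := by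
      simpa [Submodule.Quotient.mk_eq_zero] using hv
    have : ¬ ∀ φ : Module.Dual F ((ι → F) ⧸ W), φ (Submodule.Quotient.mk v) = 0 := by
      rw [Module.forall_dual_apply_eq_zero_iff]; exact hq
    push_neg at this
    obtain ⟨φ, hφ⟩ := this
    set ψ : (ι → F) →ₗ[F] F := φ.comp W.mkQ with hψ
    set y : ι → F := fun i => ψ (Pi.single i 1) with hy
    have key : ∀ w : ι → F, dotProduct y w = ψ w := by
      intro w
      have hw : w = ∑ i, w i • (Pi.single i (1 : F) : ι → F) := by
        funext j
        simp [Pi.single_apply, Finset.sum_apply, eq_comm]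
      calc dotProduct y w = ∑ i, w i * ψ (Pi.single i 1) := by
            simp [dotProduct, hy, mul_comm]
        _ = ψ (∑ i, w i • (Pi.single i (1 : F) : ι → F)) := by
            simp [map_sum, map_smul, smul_eq_mul]
        _ = ψ w := by rw [← hw]
    have hzero : ∀ s ∈ S, dotProduct y s = 0 := by
      intro s hs
      rw [key]
      have hsW : (s : ι → F) ∈ W := Submodule.subset_span hs
      have h0 : (Submodule.Quotient.mk s : (ι → F) ⧸ W) = 0 :=
        (Submodule.Quotient.mk_eq_zero W).mpr hsW
      simp [hψ, Submodule.mkQ_apply, h0]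
    have := h y hzero
    rw [key] at this
    simp only [hψ, LinearMap.comp_apply, Submodule.mkQ_apply] at this
    exact hφ this

/-- Sink-decoding criterion for `β`-network-error detecting codes: every nonzero demanded
message leads to a nonzero sink output iff each demanded standard basis vector lies in the
span of the columns of the stacked transfer matrix `G`. -/
theorem stmt_0 (F : Type*) [Field F] (n β m : ℕ) (D : Set (Fin n))
    (G : Matrix (Fin n ⊕ Fin β) (Fin m) F) :
    (∀ (x : Fin n → F) (z : Fin β → F), (∃ d ∈ D, x d ≠ 0) →
      Matrix.vecMul (Sum.elim x z) G ≠ 0) ↔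
    (∀ d ∈ D, Pi.single (Sum.inl d : Fin n ⊕ Fin β) (1 : F) ∈
      Submodule.span F (Set.range fun c : Fin m => fun i : Fin n ⊕ Fin β => G i c)) := by
  have hvm : ∀ (y : (Fin n ⊕ Fin β) → F) (c : Fin m),
      Matrix.vecMul y G c = dotProduct y (fun i => G i c) := by
    intro y c; rfl
  constructor
  · intro h d hd
    rw [dot_span_iff]
    intro y hy
    have hker : Matrix.vecMul y G = 0 := by
      funext c
      rw [hvm]
      exact hy _ ⟨c, rfl⟩
    have hy0 : ∀ d' ∈ D, y (Sum.inl d') = 0 := by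
      intro d' hd'
      by_contra hne
      refine h (fun i => y (Sum.inl i)) (fun j => y (Sum.inr j)) ⟨d', hd', hne⟩ ?_
      have : Sum.elim (fun i => y (Sum.inl i)) (fun j => y (Sum.inr j)) = y := by
        funext i; cases i <;> rfl
      rw [this]; exact hker
    simpa [dotProduct, Pi.single_apply] using hy0 d hd
  · intro h x z ⟨d, hd, hxd⟩ hker
    have hmem := (dot_span_iff _ _).mp (h d hd) (Sum.elim x z) ?_
    · apply hxd
      simpa [dotProduct, Pi.single_apply] using hmem
    · rintro s ⟨c, rfl⟩
      rw [← hvm, hker]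
      rfl
end

section
/- Let F be a field, let n, β, m be natural numbers, let D be a finite subset of Fin n, and let G be a matrix in Matrix (Fin n ⊕ Fin β) (Fin m) F. Assume that for every x : Fin n → F and every z : Fin β → F such that x d ≠ 0 for some d ∈ D, the row vector Matrix.vecMul (Sum.elim x z) G is nonzero. Then the rank of G equals the cardinality of D plus the rank of the submatrix G' of G obtained by deleting the rows indexed by Sum.inl d for d ∈ D (i.e., G restricted to the rows indexed by {i : Fin n ⊕ Fin β | ∀ d ∈ D, i ≠ Sum.inl d}). -/
/-- Rank additivity at a sink: if every message vector that is nonzero on the demanded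
coordinates `D` gives a nonzero sink output, then the rank of the stacked transfer matrix `G`
equals `|D|` plus the rank of the submatrix of `G` obtained by deleting the rows indexed by
`Sum.inl d` for `d ∈ D`. -/
theorem stmt_1 (F : Type*) [Field F] (n β m : ℕ) (D : Finset (Fin n))
    (G : Matrix (Fin n ⊕ Fin β) (Fin m) F)
    (h : ∀ (x : Fin n → F) (z : Fin β → F), (∃ d ∈ D, x d ≠ 0) →
      Matrix.vecMul (Sum.elim x z) G ≠ 0) :
    G.rank = D.card +
      (G.submatrix
        (fun i : {i : Fin n ⊕ Fin β // ∀ d ∈ D, i ≠ Sum.inl d} => (i : Fin n ⊕ Fin β))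
        id).rank := by
  classical
  set P : Fin n ⊕ Fin β → Prop := fun i => ∀ d ∈ D, i ≠ Sum.inl d with hP
  set G' : {i : Fin n ⊕ Fin β // P i} → (Fin m → F) := fun i => G i.1 with hG'
  set W : Submodule F (Fin m → F) := Submodule.span F (Set.range G') with hW
  set f : {d : Fin n // d ∈ D} → (Fin m → F) := fun d => G (Sum.inl d.1) with hf
  set U : Submodule F (Fin m → F) := Submodule.span F (Set.range f) with hU
  -- vecMul as a sum of rows
  have hvm : ∀ v : (Fin n ⊕ Fin β) → F, Matrix.vecMul v G = ∑ i, v i • G i := by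
    intro v
    funext j
    simp [Matrix.vecMul, dotProduct, Finset.sum_apply]
  -- the key cancellation lemma
  have key : ∀ c : Fin n → F, (∑ d ∈ D, c d • G (Sum.inl d)) ∈ W → ∀ d ∈ D, c d = 0 := by
    intro c hc
    by_contra hcon
    push_neg at hcon
    obtain ⟨d, hd, hcd⟩ := hcon
    rw [hW, Submodule.mem_span_range_iff_exists_fun] at hc
    obtain ⟨e, he⟩ := hc
    have hPinl : ∀ j : Fin n, j ∉ D → P (Sum.inl j) := by
      intro j hj d' hd' hEq
      injection hEq with h'
      exact hj (h' ▸ hd')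
    have hPinr : ∀ k : Fin β, P (Sum.inr k) := by
      intro k d' _ hEq
      simp at hEq
    set x : Fin n → F := fun j => if hj : j ∈ D then c j else - e ⟨Sum.inl j, hPinl j hj⟩
      with hx
    set z : Fin β → F := fun k => - e ⟨Sum.inr k, hPinr k⟩ with hz
    have hxd : x d ≠ 0 := by simpa [hx, hd] using hcd
    apply h x z ⟨d, hd, hxd⟩
    rw [hvm]
    -- split the sum over the image of D under `Sum.inl` and its complement
    set A : Finset (Fin n ⊕ Fin β) := D.image Sum.inl with hA
    have hsplit : (∑ i, Sum.elim x z i • G i) =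
        (∑ i ∈ A, Sum.elim x z i • G i) + ∑ i ∈ Aᶜ, Sum.elim x z i • G i :=
      (Finset.sum_add_sum_compl A _).symm
    have h1 : (∑ i ∈ A, Sum.elim x z i • G i) = ∑ d ∈ D, c d • G (Sum.inl d) := by
      rw [hA, Finset.sum_image (fun a _ b _ hab => by simpa using hab)]
      refine Finset.sum_congr rfl fun j hj => by simp [hx, hj]
    have hmemAc : ∀ i : Fin n ⊕ Fin β, i ∈ Aᶜ ↔ P i := by
      intro i
      simp only [Finset.mem_compl, hA, Finset.mem_image, hP]
      constructor
      · intro hi d' hd' hEq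
        exact hi ⟨d', hd', hEq.symm⟩
      · rintro hi ⟨d', hd', rfl⟩
        exact hi d' hd' rfl
    have h2 : (∑ i ∈ Aᶜ, Sum.elim x z i • G i) = - ∑ i : {i // P i}, e i • G' i := by
      rw [Finset.sum_subtype Aᶜ hmemAc (fun i => Sum.elim x z i • G i)]
      rw [← Finset.sum_neg_distrib]
      refine Finset.sum_congr rfl fun i _ => ?_
      obtain ⟨i, hi⟩ := i
      cases i with
      | inl j =>
        have hjD : j ∉ D := fun hjD => hi j hjD rfl
        simp [hx, hjD, hG']
      | inr k =>
        simp [hz, hG']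
    rw [hsplit, h1, h2, he]
    simp
  -- linear independence of the demanded rows
  have hli : LinearIndependent F f := by
    rw [Fintype.linearIndependent_iff]
    intro g hg
    set c : Fin n → F := fun j => if hj : j ∈ D then g ⟨j, hj⟩ else 0 with hc
    have hsum : (∑ d ∈ D, c d • G (Sum.inl d)) = ∑ d : {d // d ∈ D}, g d • f d := by
      rw [← Finset.sum_coe_sort D (fun d => c d • G (Sum.inl d))]
      refine Finset.sum_congr rfl fun d _ => by simp [hc, d.2, hf]
    intro i
    have := key c (by rw [hsum, hg]; exact W.zero_mem) i.1 i.2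
    simpa [hc, i.2] using this
  -- the two spans intersect trivially
  have hdisj : U ⊓ W = ⊥ := by
    rw [Submodule.eq_bot_iff]
    intro v hv
    rw [Submodule.mem_inf] at hv
    obtain ⟨hvU, hvW⟩ := hv
    rw [hU, Submodule.mem_span_range_iff_exists_fun] at hvU
    obtain ⟨g, hg⟩ := hvU
    set c : Fin n → F := fun j => if hj : j ∈ D then g ⟨j, hj⟩ else 0 with hc
    have hsum : (∑ d ∈ D, c d • G (Sum.inl d)) = v := by
      rw [← hg, ← Finset.sum_coe_sort D (fun d => c d • G (Sum.inl d))]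
      refine Finset.sum_congr rfl fun d _ => by simp [hc, d.2, hf]
    have hzero : ∀ d : {d // d ∈ D}, g d = 0 := by
      intro d
      have := key c (by rw [hsum]; exact hvW) d.1 d.2
      simpa [hc, d.2] using this
    rw [← hg]
    simp [hzero]
  -- the whole row span is the sup
  have hranges : Set.range G = Set.range f ∪ Set.range G' := by
    ext v
    constructor
    · rintro ⟨i, rfl⟩
      by_cases hi : P i
      · exact Or.inr ⟨⟨i, hi⟩, rfl⟩
      · simp only [hP, not_forall] at hi
        obtain ⟨d, hd, hEq⟩ := hi
        push_neg at hEq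
        exact Or.inl ⟨⟨d, hd⟩, by rw [hf]; exact congrArg G hEq.symm⟩
    · rintro (⟨d, rfl⟩ | ⟨i, rfl⟩)
      · exact ⟨Sum.inl d.1, rfl⟩
      · exact ⟨i.1, rfl⟩
  have hspan : Submodule.span F (Set.range G) = U ⊔ W := by
    rw [hranges, Submodule.span_union]
  -- dimensions
  have hUcard : Module.finrank F U = D.card := by
    rw [hU, finrank_span_eq_card hli]
    simp
  have hdim := Submodule.finrank_sup_add_finrank_inf_eq U W
  rw [hdisj, finrank_bot, add_zero] at hdim
  have hrow : (G.submatrix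
      (fun i : {i : Fin n ⊕ Fin β // ∀ d ∈ D, i ≠ Sum.inl d} => (i : Fin n ⊕ Fin β))
      id).rank = Module.finrank F W := by
    rw [Matrix.rank_eq_finrank_span_row]
    congr 1
  rw [Matrix.rank_eq_finrank_span_row, show Set.range G.row = Set.range G from rfl, hspan, hrow, hdim, hUcard]
end

section
/- Let F be a field, let n and N be natural numbers, let A : Matrix (Fin n) (Fin N) F, and let i : Fin N be such that the i-th column of A is nonzero and lies in the F-linear span of the remaining columns {fun k => A k j | j ≠ i}. Define B : Matrix (Fin n ⊕ Unit) (Fin N ⊕ Unit) F by B (Sum.inl k) (Sum.inl j) = A k j, B (Sum.inl k) (Sum.inr u) = 0, B (Sum.inr u) (Sum.inl j) = if j = i then 1 else 0, and B (Sum.inr u) (Sum.inr u') = 1. Let MA be a matroid on Fin N with MA.E = Set.univ such that for every S : Set (Fin N), MA.Indep S holds if and only if the family of columns of A indexed by S is linearly independent over F; let MB be a matroid on Fin N ⊕ Unit with MB.E = Set.univ satisfying the analogous property for the columns of B. Then: (a) {Sum.inl i, Sum.inr ()} is a circuit of the dual matroid MB✶; and (b) MB ／ {Sum.inr ()} = MA.map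 Sum.inl (mapping along the injection Sum.inl). In other words, the column matroid of B is the series extension of the column matroid of A obtained by adding the new element in series with column i. -/
open Set Submodule

section aux
variable {F : Type*} [Field F] {ι V : Type*} [AddCommGroup V] [Module F V] {v : ι → V}

lemma aux_mem_span_of_dep {s : Set ι} {j : ι}
    (hs : LinearIndependent F (fun x : s => v x))
    (hd : ¬ LinearIndependent F (fun x : (insert j s : Set ι) => v x)) :
    v j ∈ span F (v '' s) := by
  by_cases hj : j ∈ s
  · exact subset_span ⟨j, hj, rfl⟩
  by_contra h
  exact hd ((linearIndepOn_insert hj).2 ⟨hs, h⟩)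

lemma aux_not_mem_span {t : Set ι} (ht : LinearIndependent F (fun x : t => v x)) {j : ι}
    (hj : j ∈ t) : v j ∉ span F (v '' (t \ {j})) := by
  have hins : (insert j (t \ {j}) : Set ι) = t := by
    rw [Set.insert_diff_singleton, Set.insert_eq_self.2 hj]
  have := (linearIndepOn_insert (a := j) (s := t \ {j}) (f := v) (by simp)).1
    (by rw [hins]; exact ht)
  exact this.2

lemma aux_base_iff (M : Matroid ι) (hE : M.E = Set.univ)
    (hM : ∀ S : Set ι, M.Indep S ↔ LinearIndependent F (fun x : S => v x)) (S : Set ι) :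
    M.IsBase S ↔ (LinearIndependent F (fun x : S => v x) ∧
      span F (v '' S) = span F (Set.range v)) := by
  clear hE
  rw [Matroid.isBase_iff_maximal_indep]
  constructor
  · rintro ⟨hi, hmax⟩
    refine ⟨(hM S).1 hi, le_antisymm (span_mono (image_subset_range _ _)) (span_le.2 ?_)⟩
    rintro x ⟨j, rfl⟩
    by_contra hx
    have hjS : j ∉ S := fun h => hx (subset_span ⟨j, h, rfl⟩)
    have hins : LinearIndependent F (fun x : (insert j S : Set ι) => v x) :=
      (linearIndepOn_insert hjS).2 ⟨(hM S).1 hi, hx⟩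
    exact hjS (hmax ((hM _).2 hins) (Set.subset_insert _ _) (Set.mem_insert _ _))
  · rintro ⟨hind, hsp⟩
    refine ⟨(hM S).2 hind, fun I hI hSI => ?_⟩
    intro j hjI
    by_contra hjS
    have hLI := (hM I).1 hI
    refine aux_not_mem_span hLI hjI ?_
    have h1 : v j ∈ span F (v '' S) := by rw [hsp]; exact subset_span (Set.mem_range_self _)
    exact span_mono (Set.image_mono (Set.subset_diff_singleton hSI hjS)) h1

lemma aux_exists_base_subset (M : Matroid ι) (hE : M.E = Set.univ)
    (hM : ∀ S : Set ι, M.Indep S ↔ LinearIndependent F (fun x : S => v x)) {S : Set ι}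
    (hsp : span F (v '' S) = span F (Set.range v)) : ∃ B₀, M.IsBase B₀ ∧ B₀ ⊆ S := by
  obtain ⟨J, hJ⟩ := M.exists_isBasis S (by rw [hE]; exact Set.subset_univ S)
  refine ⟨J, (aux_base_iff M hE hM J).2 ⟨(hM J).1 hJ.indep, ?_⟩, hJ.subset⟩
  have h1 : span F (v '' S) ≤ span F (v '' J) := by
    refine span_le.2 ?_
    rintro x ⟨j, hjS, rfl⟩
    by_cases hjJ : j ∈ J
    · exact subset_span ⟨j, hjJ, rfl⟩
    · exact aux_mem_span_of_dep ((hM J).1 hJ.indep)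
        (fun h => (hJ.insert_dep ⟨hjS, hjJ⟩).not_indep ((hM _).2 h))
  exact le_antisymm (span_mono (image_subset_range _ _)) (hsp ▸ h1)

end aux

/-- The linear map extending a vector on `Fin n` by zero on the extra coordinate. -/
def extZeroMap (F : Type*) [Semiring F] (n : ℕ) : (Fin n → F) →ₗ[F] ((Fin n ⊕ Unit) → F) where
  toFun x := Sum.elim x 0
  map_add' x y := by funext z; cases z <;> simp
  map_smul' c x := by funext z; cases z <;> simp

open Matroid
open scoped Matroid

set_option maxHeartbeats 1000000 in
/-- The matrix construction for a series extension: if column `i` of `A` is nonzero and lies in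
the span of the remaining columns, and `B` is obtained from `A` by adjoining a new all-zero
column and a new row having a `1` in column `i` and in the new column and `0` elsewhere, then
the column matroid of `B` is the series extension of the column matroid of `A` by the new
element in series with `i`: the pair `{i, new}` is a circuit of the dual of the column matroid
of `B`, and contracting the new element recovers the column matroid of `A`. -/
theorem stmt_5 (F : Type*) [Field F] (n N : ℕ) (A : Matrix (Fin n) (Fin N) F) (i : Fin N)
    (hi : (fun k => A k i) ≠ (0 : Fin n → F))
    (hspan : (fun k => A k i) ∈
      Submodule.span F {v : Fin n → F | ∃ j, j ≠ i ∧ v = fun k => A k j})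
    (B : Matrix (Fin n ⊕ Unit) (Fin N ⊕ Unit) F)
    (hB₁ : ∀ k j, B (Sum.inl k) (Sum.inl j) = A k j)
    (hB₂ : ∀ k u, B (Sum.inl k) (Sum.inr u) = 0)
    (hB₃ : ∀ u j, B (Sum.inr u) (Sum.inl j) = if j = i then 1 else 0)
    (hB₄ : ∀ u u', B (Sum.inr u) (Sum.inr u') = 1)
    (MA : Matroid (Fin N)) (hMAE : MA.E = Set.univ)
    (hMA : ∀ S : Set (Fin N),
      MA.Indep S ↔ LinearIndependent F (fun j : S => fun k => A k (j : Fin N)))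
    (MB : Matroid (Fin N ⊕ Unit)) (hMBE : MB.E = Set.univ)
    (hMB : ∀ S : Set (Fin N ⊕ Unit),
      MB.Indep S ↔ LinearIndependent F (fun c : S => fun k => B k (c : Fin N ⊕ Unit))) :
    (MB✶).IsCircuit {Sum.inl i, Sum.inr ()} ∧
    MB ／ {Sum.inr ()} = MA.map Sum.inl Sum.inl_injective.injOn := by
  classical
  clear hi
  set v : Fin N → (Fin n → F) := fun j k => A k j with hv
  set w : (Fin N ⊕ Unit) → ((Fin n ⊕ Unit) → F) := fun c k => B k c with hw
  set e : (Fin n ⊕ Unit) → F := w (Sum.inr ()) with he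
  have hMA' : ∀ S : Set (Fin N), MA.Indep S ↔ LinearIndependent F (fun j : S => v j) := hMA
  have hMB' : ∀ S : Set (Fin N ⊕ Unit), MB.Indep S ↔
      LinearIndependent F (fun c : S => w c) := hMB
  set τ : ((Fin n ⊕ Unit) → F) →ₗ[F] (Fin n → F) := LinearMap.funLeft F F Sum.inl with hτ
  set π : ((Fin n ⊕ Unit) → F) →ₗ[F] F := LinearMap.proj (Sum.inr ()) with hπ
  set Φ : (Fin n → F) →ₗ[F] ((Fin n ⊕ Unit) → F) := extZeroMap F n with hΦ
  have hτΦ : ∀ x, τ (Φ x) = x := by intro x; funext k; simp [hτ, hΦ, extZeroMap]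
  have hπΦ : ∀ x, π (Φ x) = 0 := by intro x; simp [hπ, hΦ, extZeroMap]
  have hτw : ∀ j, τ (w (Sum.inl j)) = v j := fun j => funext fun k => hB₁ k j
  have hπw : ∀ j, π (w (Sum.inl j)) = if j = i then 1 else 0 := fun j => hB₃ () j
  have hπe : π e = 1 := hB₄ () ()
  have hwinr : ∀ u : Unit, w (Sum.inr u) = e := fun u => by cases u; rfl
  have hwd : ∀ j, w (Sum.inl j) = Φ (v j) + (if j = i then (1 : F) else 0) • e := by
    intro j
    funext x
    cases x with
    | inl k =>
      show B (Sum.inl k) (Sum.inl j)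
        = (Φ (v j) + (if j = i then (1 : F) else 0) • e) (Sum.inl k)
      have h1 : (Φ (v j)) (Sum.inl k) = A k j := rfl
      have h2 : e (Sum.inl k) = 0 := hB₂ k ()
      rw [Pi.add_apply, Pi.smul_apply, h1, h2, hB₁, smul_zero, add_zero]
    | inr u =>
      cases u
      show B (Sum.inr ()) (Sum.inl j)
        = (Φ (v j) + (if j = i then (1 : F) else 0) • e) (Sum.inr ())
      have h1 : (Φ (v j)) (Sum.inr ()) = 0 := rfl
      have h2 : e (Sum.inr ()) = 1 := hB₄ () ()
      rw [Pi.add_apply, Pi.smul_apply, h1, h2, hB₃, smul_eq_mul, mul_one, zero_add]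
  have hΦw : ∀ j, Φ (v j) = w (Sum.inl j) - (if j = i then (1 : F) else 0) • e := by
    intro j; rw [hwd j]; abel
  have hΦinj : Function.Injective Φ := fun x y h => funext fun k => congrFun h (Sum.inl k)
  -- independence transfer
  have hIndPair : ∀ S : Set (Fin N), LinearIndependent F (fun j : S => v j) →
      LinearIndependent F (fun j : S => w (Sum.inl j)) := by
    intro S h
    refine LinearIndependent.of_comp τ ?_
    have : (⇑τ ∘ fun j : S => w (Sum.inl j)) = fun j : S => v j :=
      funext fun j => hτw j
    rw [this]; exact h
  have hIndImg : ∀ S : Set (Fin N), LinearIndependent F (fun j : S => v j) →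
      LinearIndependent F (fun x : (Sum.inl '' S : Set (Fin N ⊕ Unit)) => w x) := by
    intro S h
    exact (linearIndependent_equiv (Equiv.Set.image Sum.inl S Sum.inl_injective)).1
      (hIndPair S h)
  -- e is not in the span of the B-columns of an MA-independent set
  have hENotMem : ∀ S : Set (Fin N), LinearIndependent F (fun j : S => v j) →
      e ∉ span F (w '' (Sum.inl '' S)) := by
    intro S hS hmem
    rw [show w '' (Sum.inl '' S) = (fun j => w (Sum.inl j)) '' S from by
      rw [Set.image_image]] at hmem
    rw [Finsupp.mem_span_image_iff_linearCombination] at hmem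
    obtain ⟨l, hl, hle⟩ := hmem
    have h2 : Finsupp.linearCombination F v l = τ e := by
      have hfun : (⇑τ ∘ fun j => w (Sum.inl j)) = v := funext fun j => hτw j
      rw [← hle, Finsupp.apply_linearCombination, hfun]
    have hτe : τ e = 0 := funext fun k => hB₂ k ()
    rw [hτe] at h2
    have hl0 : l = 0 := linearIndepOn_iff.1 hS l hl h2
    rw [hl0, map_zero] at hle
    have h3 : π e = 0 := by rw [← hle]; simp
    rw [hπe] at h3
    exact one_ne_zero h3
  -- the i-th column of B is not in the span of columns indexed by J when i ∉ J
  have hNotMemKer : ∀ J : Set (Fin N), i ∉ J →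
      w (Sum.inl i) ∉ span F (w '' (Sum.inl '' J)) := by
    intro J hiJ hmem
    have hle : span F (w '' (Sum.inl '' J)) ≤ LinearMap.ker π := by
      refine span_le.2 ?_
      rintro x ⟨c, ⟨j, hj, rfl⟩, rfl⟩
      have hji : j ≠ i := fun h => hiJ (h ▸ hj)
      rw [SetLike.mem_coe, LinearMap.mem_ker, hπw j, if_neg hji]
    have h1 := hle hmem
    rw [LinearMap.mem_ker, hπw i, if_pos rfl] at h1
    exact one_ne_zero h1
  -- Φ of anything in a span lands in a w-span once e is available
  have hΦspanT : ∀ (S : Set (Fin N)) (T : Set (Fin N ⊕ Unit)),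
      (∀ j ∈ S, Sum.inl j ∈ T) → e ∈ span F (w '' T) →
      ∀ x ∈ span F (v '' S), Φ x ∈ span F (w '' T) := by
    intro S T hST heT x hx
    have h1 : Φ x ∈ (span F (v '' S)).map Φ := Submodule.mem_map_of_mem hx
    rw [← Submodule.span_image] at h1
    refine span_le.2 ?_ h1
    rintro y ⟨z, ⟨j, hj, rfl⟩, rfl⟩
    rw [SetLike.mem_coe, hΦw j]
    exact sub_mem (subset_span ⟨Sum.inl j, hST j hj, rfl⟩) (smul_mem _ _ heT)
  -- spanning transfer
  have hSp : ∀ (S : Set (Fin N)) (T : Set (Fin N ⊕ Unit)),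
      (∀ j ∈ S, Sum.inl j ∈ T) → e ∈ span F (w '' T) →
      span F (v '' S) = span F (Set.range v) →
      span F (w '' T) = span F (Set.range w) := by
    intro S T hST heT hSsp
    refine le_antisymm (span_mono (image_subset_range _ _)) (span_le.2 ?_)
    rintro x ⟨c, rfl⟩
    cases c with
    | inr u => rw [hwinr u]; exact heT
    | inl j =>
      have hj : Φ (v j) ∈ span F (w '' T) :=
        hΦspanT S T hST heT _ (by rw [hSsp]; exact subset_span (Set.mem_range_self _))
      rw [SetLike.mem_coe, hwd j]
      exact add_mem hj (smul_mem _ _ heT)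
  -- span of the set of all columns other than i
  have hset : {x : Fin n → F | ∃ j, j ≠ i ∧ x = fun k => A k j} = v '' (Set.univ \ {i}) := by
    ext x
    constructor
    · rintro ⟨j, hj, rfl⟩; exact ⟨j, ⟨trivial, hj⟩, rfl⟩
    · rintro ⟨j, ⟨-, hj⟩, rfl⟩; exact ⟨j, hj, rfl⟩
  have hspan' : span F (v '' (Set.univ \ {i})) = span F (Set.range v) := by
    refine le_antisymm (span_mono (image_subset_range _ _)) (span_le.2 ?_)
    rintro x ⟨j, rfl⟩
    by_cases hj : j = i
    · subst hj; rw [← hset]; exact hspan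
    · exact subset_span ⟨j, ⟨trivial, hj⟩, rfl⟩
  obtain ⟨J, hJbase, hJsub⟩ := aux_exists_base_subset MA hMAE hMA' hspan'
  have hiJ : i ∉ J := fun h => (hJsub h).2 rfl
  have hJind : LinearIndependent F (fun j : J => v j) :=
    ((aux_base_iff MA hMAE hMA' J).1 hJbase).1
  have hJsp : span F (v '' J) = span F (Set.range v) :=
    ((aux_base_iff MA hMAE hMA' J).1 hJbase).2
  -- base Bb₁ of MB avoiding `inl i`
  have hinrnotmem : ∀ S : Set (Fin N), Sum.inr () ∉ (Sum.inl '' S : Set (Fin N ⊕ Unit)) := by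
    rintro S ⟨j, -, h⟩; exact Sum.inl_ne_inr h
  have hBase1 : ∀ S : Set (Fin N), MA.IsBase S →
      MB.IsBase (Sum.inl '' S ∪ {Sum.inr ()}) := by
    intro S hS
    have hSind := ((aux_base_iff MA hMAE hMA' S).1 hS).1
    have hSsp := ((aux_base_iff MA hMAE hMA' S).1 hS).2
    refine (aux_base_iff MB hMBE hMB' _).2 ⟨?_, ?_⟩
    · rw [Set.union_singleton]
      exact (linearIndepOn_insert (hinrnotmem S)).2 ⟨hIndImg S hSind, hENotMem S hSind⟩
    · exact hSp S _ (fun j hj => Or.inl ⟨j, hj, rfl⟩)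
        (subset_span ⟨Sum.inr (), Or.inr rfl, rfl⟩) hSsp
  have hBb₁ : MB.IsBase (Sum.inl '' J ∪ {Sum.inr ()}) := hBase1 J hJbase
  -- base Bb₂ of MB avoiding `inr ()`
  have hBb₂ : MB.IsBase (Sum.inl '' (insert i J)) := by
    have hinsp : span F (v '' (insert i J)) = span F (Set.range v) := by
      refine le_antisymm (span_mono (image_subset_range _ _)) ?_
      rw [← hJsp]
      exact span_mono (Set.image_mono (Set.subset_insert i J))
    have hΦvi : Φ (v i) ∈ span F (w '' (Sum.inl '' J)) := by
      have h1 : Φ (v i) ∈ (span F (v '' J)).map Φ := by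
        refine Submodule.mem_map_of_mem ?_
        rw [hJsp]; exact subset_span (Set.mem_range_self _)
      rw [← Submodule.span_image] at h1
      refine span_le.2 ?_ h1
      rintro y ⟨z, ⟨j, hj, rfl⟩, rfl⟩
      have hji : j ≠ i := fun h => hiJ (h ▸ hj)
      have h2 : Φ (v j) = w (Sum.inl j) := by rw [hΦw j, if_neg hji, zero_smul, sub_zero]
      rw [SetLike.mem_coe, h2]
      exact subset_span ⟨Sum.inl j, ⟨j, hj, rfl⟩, rfl⟩
    have heT : e ∈ span F (w '' (Sum.inl '' (insert i J))) := by
      have h1 : e = w (Sum.inl i) - Φ (v i) := by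
        rw [hwd i, if_pos rfl, one_smul]; abel
      rw [h1]
      refine sub_mem (subset_span ⟨Sum.inl i, ⟨i, Set.mem_insert _ _, rfl⟩, rfl⟩) ?_
      exact span_mono (Set.image_mono (Set.image_mono (Set.subset_insert i J))) hΦvi
    refine (aux_base_iff MB hMBE hMB' _).2 ⟨?_, ?_⟩
    · rw [Set.image_insert_eq]
      refine (linearIndepOn_insert ?_).2 ⟨hIndImg J hJind, hNotMemKer J hiJ⟩
      rintro ⟨j, hj, hji⟩
      exact hiJ ((Sum.inl_injective hji) ▸ hj)
    · exact hSp (insert i J) _ (fun j hj => ⟨j, hj, rfl⟩) heT hinsp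
  constructor
  · -- the circuit part
    have hPE : ({Sum.inl i, Sum.inr ()} : Set (Fin N ⊕ Unit)) ⊆ MB✶.E := by
      rw [Matroid.dual_ground, hMBE]; exact Set.subset_univ _
    have hIi : MB✶.Indep {Sum.inl i} := by
      rw [Matroid.dual_indep_iff_exists']
      refine ⟨(Set.singleton_subset_iff.2 (by rw [hMBE]; trivial)), _, hBb₁, ?_⟩
      rw [Set.disjoint_left]
      rintro x rfl (⟨j, hj, hji⟩ | hx)
      · exact hiJ ((Sum.inl_injective hji) ▸ hj)
      · exact Sum.inl_ne_inr hx
    have hIr : MB✶.Indep {Sum.inr ()} := by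
      rw [Matroid.dual_indep_iff_exists']
      refine ⟨(Set.singleton_subset_iff.2 (by rw [hMBE]; trivial)), _, hBb₂, ?_⟩
      rw [Set.disjoint_left]
      rintro x rfl ⟨j, -, hj⟩
      exact Sum.inl_ne_inr hj
    refine ⟨?_, ?_⟩
    · -- the pair is dependent in the dual
      rw [Matroid.dep_iff]
      refine ⟨fun hind => ?_, hPE⟩
      rw [Matroid.dual_indep_iff_exists'] at hind
      obtain ⟨-, Bb, hBb, hdisj⟩ := hind
      have hBbsp := ((aux_base_iff MB hMBE hMB' Bb).1 hBb).2
      have hle : span F (w '' Bb) ≤ LinearMap.ker π := by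
        refine span_le.2 ?_
        rintro x ⟨c, hc, rfl⟩
        have hnc : c ∉ ({Sum.inl i, Sum.inr ()} : Set (Fin N ⊕ Unit)) :=
          Set.disjoint_right.1 hdisj hc
        cases c with
        | inl j =>
          have hji : j ≠ i := fun h => hnc (Or.inl (by rw [h]))
          rw [SetLike.mem_coe, LinearMap.mem_ker, hπw j, if_neg hji]
        | inr u =>
          cases u
          exact absurd (Or.inr rfl) hnc
      have hemem : e ∈ span F (w '' Bb) := by
        rw [hBbsp]; exact subset_span (Set.mem_range_self _)
      have h1 := hle hemem
      rw [LinearMap.mem_ker, hπe] at h1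
      exact one_ne_zero h1
    · -- minimality
      intro D hD hDP
      have hiD : Sum.inl i ∈ D := by
        by_contra hiD
        have hsub : D ⊆ {Sum.inr ()} := by
          intro x hx
          rcases hDP hx with rfl | hx'
          · exact absurd hx hiD
          · exact hx'
        exact hD.not_indep (hIr.subset hsub)
      have hrD : Sum.inr () ∈ D := by
        by_contra hrD
        have hsub : D ⊆ {Sum.inl i} := by
          intro x hx
          rcases hDP hx with rfl | hx'
          · rfl
          · exact absurd (hx' ▸ hx) hrD
        exact hD.not_indep (hIi.subset hsub)
      rintro x (rfl | rfl)
      · exact hiD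
      · exact hrD
  · -- the contraction part
    rw [Matroid.contract, show MA.map Sum.inl Sum.inl_injective.injOn =
      ((MA.map Sum.inl Sum.inl_injective.injOn)✶)✶ from (Matroid.dual_dual _).symm]
    refine congrArg Matroid.dual ?_
    rw [Matroid.delete]
    have hground : (Set.univ \ {Sum.inr ()} : Set (Fin N ⊕ Unit)) = Set.range Sum.inl := by
      ext x
      cases x with
      | inl j => simp
      | inr u => cases u; simp
    refine Matroid.ext_indep ?_ ?_
    · simp only [Matroid.restrict_ground_eq, Matroid.dual_ground, Matroid.map_ground,
        hMBE, hMAE, Set.image_univ]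
      exact hground
    · intro I hI
      rw [Matroid.restrict_ground_eq, Matroid.dual_ground, hMBE, hground] at hI
      rw [Matroid.restrict_indep_iff, Matroid.dual_indep_iff_exists',
        Matroid.dual_indep_iff_exists']
      constructor
      · rintro ⟨⟨-, Bb, hBb, hdisj⟩, -⟩
        set S : Set (Fin N) := Sum.inl ⁻¹' Bb with hS
        have hBbsp := ((aux_base_iff MB hMBE hMB' Bb).1 hBb).2
        have hSsp : span F (v '' S) = span F (Set.range v) := by
          refine le_antisymm (span_mono (image_subset_range _ _)) (span_le.2 ?_)
          rintro x ⟨j, rfl⟩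
          have hU : span F (w '' Bb) ≤ (span F (v '' S)).map Φ ⊔ (F ∙ e) := by
            refine span_le.2 ?_
            rintro x ⟨c, hc, rfl⟩
            cases c with
            | inl j' =>
              rw [SetLike.mem_coe, hwd j']
              exact add_mem
                (Submodule.mem_sup_left (Submodule.mem_map_of_mem
                  (subset_span ⟨j', hc, rfl⟩)))
                (Submodule.mem_sup_right (smul_mem _ _ (Submodule.mem_span_singleton_self e)))
            | inr u =>
              rw [SetLike.mem_coe, hwinr u]
              exact Submodule.mem_sup_right (Submodule.mem_span_singleton_self e)
          have hΦj : Φ (v j) ∈ (span F (v '' S)).map Φ ⊔ (F ∙ e) := by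
            refine hU ?_
            rw [hBbsp, hΦw j]
            exact sub_mem (subset_span (Set.mem_range_self _))
              (smul_mem _ _ (subset_span (Set.mem_range_self (Sum.inr ()))))
          rw [Submodule.mem_sup] at hΦj
          obtain ⟨y, hy, z, hz, hyz⟩ := hΦj
          obtain ⟨y₀, hy₀, rfl⟩ := hy
          obtain ⟨c, rfl⟩ := Submodule.mem_span_singleton.1 hz
          have hc0 : c = 0 := by
            have h4 := congrArg π hyz
            rw [map_add, hπΦ, map_smul, hπe, smul_eq_mul, mul_one, zero_add, hπΦ] at h4
            exact h4
          rw [hc0, zero_smul, add_zero] at hyz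
          rw [show v j = y₀ from hΦinj hyz.symm]
          exact hy₀
        obtain ⟨B₀, hB₀, hB₀S⟩ := aux_exists_base_subset MA hMAE hMA' hSsp
        refine ⟨hI.trans (by rw [Matroid.map_ground, hMAE, Set.image_univ]),
          Sum.inl '' B₀, (Matroid.map_isBase_iff _ _ _).2 ⟨B₀, hB₀, rfl⟩, ?_⟩
        refine hdisj.mono_right ?_
        rintro x ⟨b, hb, rfl⟩
        exact hB₀S hb
      · rintro ⟨-, B', hB', hdisj⟩
        obtain ⟨B₀, hB₀, rfl⟩ := (Matroid.map_isBase_iff _ _ _).1 hB'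
        refine ⟨⟨by rw [hMBE]; exact Set.subset_univ _,
          Sum.inl '' B₀ ∪ {Sum.inr ()}, hBase1 B₀ hB₀, ?_⟩,
          by rw [Matroid.dual_ground, hMBE, hground]; exact hI⟩
        rw [Set.disjoint_union_right]
        refine ⟨hdisj, Set.disjoint_singleton_right.2 ?_⟩
        intro hmem
        obtain ⟨j, hj⟩ := hI hmem
        exact Sum.inl_ne_inr hj
end

section
/- Let K be a field, let k be a natural number, let ι be a finite type, let A : ι → (Fin k → K) be a family of vectors (the columns of a matrix over K), and let F ⊆ ι be a flat of the column matroid of A, i.e., F = {j : ι | A j ∈ Submodule.span K (A '' F)}. Then there exist a field L, a ring homomorphism φ : K →+* L, and a vector v : Fin k → L such that for every subset X ⊆ ι: v ∈ Submodule.span L ((fun j => fun t => φ (A j t)) '' X) if and only if F ⊆ {j : ι | A j ∈ Submodule.span K (A '' X)}. (This realizes the principal single-element extension of the column matroid of A generated by the flat F as a column matroid over an extension field of K.) -/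
universe u v

set_option synthInstance.maxHeartbeats 400000
set_option maxHeartbeats 1000000
open MvPolynomial

lemma mem_iff_dual_vanish {K : Type*} {V : Type*} [Field K] [AddCommGroup V] [Module K V]
    (U : Submodule K V) (x : V) :
    x ∈ U ↔ ∀ f : Module.Dual K V, (∀ u ∈ U, f u = 0) → f x = 0 := by
  constructor
  · exact fun hx f hf => hf x hx
  · intro h
    rw [← Submodule.ker_mkQ U, LinearMap.mem_ker]
    rw [← Module.forall_dual_apply_eq_zero_iff K (U.mkQ x)]
    intro g
    exact h (g.comp U.mkQ) (fun u hu => by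
      simp [Submodule.mkQ_apply, (Submodule.Quotient.mk_eq_zero U).2 hu])

-- linear independence of the variables over K inside the fraction field
lemma indep_vars {K : Type u} [Field K] {σ : Type*} [DecidableEq σ] {ι : Type*} (e : ι ↪ σ)
    (s : Finset ι) (c : ι → K)
    (h : ∑ j ∈ s, algebraMap (MvPolynomial σ K) (FractionRing (MvPolynomial σ K))
        (MvPolynomial.C (c j) * MvPolynomial.X (e j)) = 0) :
    ∀ j ∈ s, c j = 0 := by
  intro j0 hj0
  rw [← map_sum, ← map_zero (algebraMap (MvPolynomial σ K) (FractionRing (MvPolynomial σ K)))]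
    at h
  have h2 := IsFractionRing.injective (MvPolynomial σ K)
    (FractionRing (MvPolynomial σ K)) h
  have h3 := congrArg (MvPolynomial.coeff (Finsupp.single (e j0) 1)) h2
  rw [MvPolynomial.coeff_zero, MvPolynomial.coeff_sum] at h3
  rw [Finset.sum_eq_single j0] at h3
  · simpa [MvPolynomial.coeff_C_mul, MvPolynomial.coeff_X'] using h3
  · intro b hb hbne
    have : Finsupp.single (e b) (1:ℕ) ≠ Finsupp.single (e j0) 1 := by
      simp [Finsupp.single_left_inj (one_ne_zero), e.injective.ne hbne]
    rw [MvPolynomial.coeff_C_mul, MvPolynomial.coeff_X', if_neg this, mul_zero]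
  · intro hj; exact absurd hj0 hj


/-- The principal extension of a representable matroid generated by a flat is representable
over an extension field: given columns `A : ι → (Fin k → K)` and a flat `F` of the associated
column matroid, there are a field `L`, an embedding `φ : K →+* L` and a new column
`v : Fin k → L` such that `v` lies in the span of the (transported) columns indexed by `X`
exactly when `F` is contained in the closure of `X` in the column matroid of `A`. -/
theorem stmt_7 (K : Type u) [Field K] (k : ℕ) (ι : Type v) [Fintype ι]
    (A : ι → (Fin k → K)) (F : Set ι)
    (hF : F = {j : ι | A j ∈ Submodule.span K (A '' F)}) :
    ∃ (L : Type u) (_ : Field L) (φ : K →+* L) (v : Fin k → L),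
      ∀ X : Set ι,
        v ∈ Submodule.span L ((fun j => fun t => φ (A j t)) '' X) ↔
          F ⊆ {j : ι | A j ∈ Submodule.span K (A '' X)} := by
  classical
  set P := MvPolynomial (Fin (Fintype.card ι)) K with hP
  set L := FractionRing P with hL
  let e : ι ↪ Fin (Fintype.card ι) := (Fintype.equivFin ι).toEmbedding
  let ψ : P →+* L := algebraMap P L
  let φ : K →+* L := ψ.comp MvPolynomial.C
  let μ : (Fin k → K) →ₛₗ[φ] (Fin k → L) :=
    { toFun := fun w s => φ (w s),
      map_add' := fun a b => by funext s; simp,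
      map_smul' := fun c w => by funext s; simp [Pi.smul_apply, smul_eq_mul, map_mul] }
  let Fs := (Set.toFinite F).toFinset
  let t : ι → L := fun j => ψ (MvPolynomial.X (e j))
  refine ⟨L, inferInstance, φ, ∑ j ∈ Fs, t j • (μ (A j)), fun X => ?_⟩
  have himg : (fun j => fun s => φ (A j s)) '' X = μ '' (A '' X) := by
    rw [Set.image_image]; rfl
  constructor
  · intro hv j0 hj0F
    rw [Set.mem_setOf_eq, mem_iff_dual_vanish]
    intro f hf
    let g : Module.Dual L (Fin k → L) :=
      ∑ s : Fin k, φ (f (fun r => if s = r then 1 else 0)) • LinearMap.proj s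
    have hg : ∀ w : Fin k → K, g (μ w) = φ (f w) := by
      intro w
      rw [LinearMap.pi_apply_eq_sum_univ f w]
      simp only [g, LinearMap.sum_apply, LinearMap.smul_apply, LinearMap.proj_apply,
        map_sum, smul_eq_mul, map_mul]
      refine Finset.sum_congr rfl fun s _ => ?_
      show φ (f fun r => if s = r then 1 else 0) * μ w s = _
      simp [μ, mul_comm]
    have hker : Submodule.span L ((fun j => fun s => φ (A j s)) '' X) ≤ LinearMap.ker g := by
      rw [Submodule.span_le]
      rintro y ⟨j, hj, rfl⟩
      show g (μ (A j)) = 0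
      rw [hg,
        hf (A j) (Submodule.subset_span ⟨j, hj, rfl⟩), map_zero]
    have hgv : g (∑ j ∈ Fs, t j • (μ (A j))) = 0 := hker hv
    rw [map_sum] at hgv
    simp only [map_smul, smul_eq_mul, hg] at hgv
    have hsum : ∑ j ∈ Fs, ψ (MvPolynomial.C (f (A j)) * MvPolynomial.X (e j)) = 0 := by
      rw [← hgv]
      refine Finset.sum_congr rfl fun j _ => ?_
      rw [map_mul, mul_comm]
      rfl
    have := indep_vars e Fs (fun j => f (A j)) hsum j0 ((Set.Finite.mem_toFinset _).2 hj0F)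
    exact this
  · intro hX
    rw [himg]
    have key : ∀ w ∈ Submodule.span K (A '' X), μ w ∈ Submodule.span L (μ '' (A '' X)) := by
      intro w hw
      induction hw using Submodule.span_induction with
      | mem x hx => exact Submodule.subset_span ⟨x, hx, rfl⟩
      | zero => rw [map_zero]; exact Submodule.zero_mem _
      | add x y _ _ hx hy => rw [map_add]; exact Submodule.add_mem _ hx hy
      | smul c x _ hx => rw [LinearMap.map_smulₛₗ]; exact Submodule.smul_mem _ _ hx
    exact Submodule.sum_mem _ fun j hj => Submodule.smul_mem _ _
      (key _ (hX ((Set.Finite.mem_toFinset _).1 hj)))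
end

section
/- Let K and L be fields with L a K-algebra, let M and k be natural numbers, and let b : Basis (Fin M) K L be a K-basis of L. Let S be a set of vectors in Fin k → K, for each r : Fin M let S_r be a set of vectors in Fin k → K, and let v : Fin M → (Fin k → K) be such that for every r : Fin M, v r ∈ Submodule.span K S and v r ∉ Submodule.span K (S_r). Define w : Fin k → L by w t = ∑ r, (algebraMap K L (v r t)) * b r. Then w ∈ Submodule.span L ((fun u => fun t => algebraMap K L (u t)) '' S), and for every r : Fin M, w ∉ Submodule.span L ((fun u => fun t => algebraMap K L (u t)) '' S_r). -/
/-- Key step in the representability of principal extensions: if each `v r` lies in the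
`K`-span of `S` but not in the `K`-span of `S_r`, then the vector
`w t = ∑ r, (v r t) • b r` over the extension field `L` (with `K`-basis `b`) lies in the
`L`-span of the transported set `S` but in none of the `L`-spans of the transported sets
`S_r`. -/
theorem stmt_8 (K L : Type*) [Field K] [Field L] [Algebra K L] (M k : ℕ)
    (b : Module.Basis (Fin M) K L) (S : Set (Fin k → K)) (Sr : Fin M → Set (Fin k → K))
    (v : Fin M → (Fin k → K))
    (hv : ∀ r : Fin M, v r ∈ Submodule.span K S ∧ v r ∉ Submodule.span K (Sr r))
    (w : Fin k → L)
    (hw : ∀ t, w t = ∑ r : Fin M, algebraMap K L (v r t) * b r) :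
    w ∈ Submodule.span L ((fun u => fun t => algebraMap K L (u t)) '' S) ∧
    ∀ r : Fin M, w ∉ Submodule.span L ((fun u => fun t => algebraMap K L (u t)) '' (Sr r)) := by
  set φ : (Fin k → K) → (Fin k → L) := fun u t => algebraMap K L (u t) with hφdef
  -- the coordinates of w t in the basis b are v s t
  have hrepr : ∀ t, ∀ s : Fin M, b.repr (w t) s = v s t := by
    intro t s
    have : w t = ∑ r : Fin M, v r t • b r := by
      rw [hw t]
      exact Finset.sum_congr rfl fun r _ => (Algebra.smul_def _ _).symm
    rw [this, b.repr_sum_self]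
  constructor
  · -- φ maps the K-span of S into the L-span of φ '' S
    have hφ : ∀ u ∈ Submodule.span K S, φ u ∈ Submodule.span L (φ '' S) := by
      intro u hu
      induction hu using Submodule.span_induction with
      | mem x hx => exact Submodule.subset_span ⟨x, hx, rfl⟩
      | zero =>
          have : φ 0 = 0 := by funext t; simp [hφdef]
          rw [this]; exact Submodule.zero_mem _
      | add x y hx hy ihx ihy =>
          have : φ (x + y) = φ x + φ y := by funext t; simp [hφdef]
          rw [this]; exact Submodule.add_mem _ ihx ihy
      | smul c x hx ih =>
          have : φ (c • x) = algebraMap K L c • φ x := by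
            funext t; simp [hφdef, Algebra.smul_def]
          rw [this]; exact Submodule.smul_mem _ _ ih
    have hwsum : w = ∑ r : Fin M, b r • φ (v r) := by
      funext t
      rw [hw t]
      simp only [Finset.sum_apply, Pi.smul_apply, smul_eq_mul, hφdef]
      exact Finset.sum_congr rfl fun r _ => mul_comm _ _
    rw [hwsum]
    exact Submodule.sum_mem _ fun r _ => Submodule.smul_mem _ _ (hφ _ (hv r).1)
  · intro r hmem
    obtain ⟨n, c, g, hsum⟩ := Submodule.mem_span_set'.mp hmem
    choose u hu hφu using fun i => (g i).2
    apply (hv r).2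
    have hkey : v r = ∑ i, b.repr (c i) r • u i := by
      funext t
      have h1 : w t = ∑ i, c i * algebraMap K L (u i t) := by
        rw [← hsum]
        simp only [Finset.sum_apply, Pi.smul_apply, smul_eq_mul]
        refine Finset.sum_congr rfl fun i _ => ?_
        rw [← hφu i]
      have := hrepr t r
      rw [h1] at this
      rw [← this]
      simp only [map_sum, Finsupp.coe_finset_sum, Finset.sum_apply, Pi.smul_apply,
        smul_eq_mul]
      refine Finset.sum_congr rfl fun i _ => ?_
      have : c i * algebraMap K L (u i t) = u i t • c i := by
        rw [Algebra.smul_def, mul_comm]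
      rw [this, map_smul]
      simp [mul_comm]
    rw [hkey]
    exact Submodule.sum_mem _ fun i _ => Submodule.smul_mem _ _ (Submodule.subset_span (hu i))
end

section
/- Let F be a field and let M₁, M₂, M₃, M₄, M₅, M₆, M₇, M₈, P₉, P₁₀, P₁₁, P₁₂, P₁₃, P₁₄ be elements of F satisfying the nine equations: (1) P₉ + M₁*M₅*P₁₀ = 0; (2) M₂*M₅*P₁₀ + M₃*M₆*P₁₀ = 0; (3) M₄*M₆*P₁₀ = 1; (4) M₁*M₅*P₁₁ + M₁*M₇*P₁₂ = 0; (5) M₂*M₅*P₁₁ + M₃*M₆*P₁₁ + M₂*M₇*P₁₂ = 1; (6) M₄*M₆*P₁₁ + M₈*P₁₂ = 0; (7) M₁*M₇*P₁₃ = 1; (8) M₂*M₇*P₁₃ + M₃*P₁₄ = 0; (9) M₈*P₁₃ + M₄*P₁₄ = 0. Then (1 : F) + 1 = 0, i.e., F has characteristic two. -/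
/-- The nine consistency conditions for a scalar linear single-edge network-error detecting
code on the network `Ñ₁` force the field to have characteristic two. -/
theorem stmt_10 (F : Type*) [Field F]
    (M₁ M₂ M₃ M₄ M₅ M₆ M₇ M₈ P₉ P₁₀ P₁₁ P₁₂ P₁₃ P₁₄ : F)
    (h1 : P₉ + M₁ * M₅ * P₁₀ = 0)
    (h2 : M₂ * M₅ * P₁₀ + M₃ * M₆ * P₁₀ = 0)
    (h3 : M₄ * M₆ * P₁₀ = 1)
    (h4 : M₁ * M₅ * P₁₁ + M₁ * M₇ * P₁₂ = 0)
    (h5 : M₂ * M₅ * P₁₁ + M₃ * M₆ * P₁₁ + M₂ * M₇ * P₁₂ = 1)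
    (h6 : M₄ * M₆ * P₁₁ + M₈ * P₁₂ = 0)
    (h7 : M₁ * M₇ * P₁₃ = 1)
    (h8 : M₂ * M₇ * P₁₃ + M₃ * P₁₄ = 0)
    (h9 : M₈ * P₁₃ + M₄ * P₁₄ = 0) :
    (1 : F) + 1 = 0 := by
  have hM₁ : M₁ ≠ 0 := fun h => by simp [h] at h7
  have hM₄ : M₄ ≠ 0 := fun h => by simp [h] at h3
  have hP₁₀ : P₁₀ ≠ 0 := fun h => by simp [h] at h3
  have hP₁₃ : P₁₃ ≠ 0 := fun h => by simp [h] at h7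
  have h2' : M₂ * M₅ + M₃ * M₆ = 0 :=
    mul_right_cancel₀ hP₁₀ (by linear_combination h2)
  have h4' : M₅ * P₁₁ + M₇ * P₁₂ = 0 :=
    mul_left_cancel₀ hM₁ (by linear_combination h4)
  have ha : M₂ * M₇ * P₁₂ = 1 := by linear_combination h5 - P₁₁ * h2'
  have hb : M₃ * M₆ * P₁₁ = 1 := by linear_combination h5 - M₂ * h4'
  have hc : M₂ * M₇ * M₄ = M₃ * M₈ :=
    mul_right_cancel₀ hP₁₃ (by linear_combination M₄ * h8 - M₃ * h9)
  have key : M₄ * (1 + 1) = M₄ * 0 := by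
    linear_combination -(M₄ * ha + M₄ * hb - P₁₂ * hc - M₃ * h6)
  have := mul_left_cancel₀ hM₄ key
  simpa using this
end

section
/- Let F be a field, let n, m, β be natural numbers, let j : Fin n, let G : Matrix (Fin n) (Fin m) F and H : Matrix (Fin β) (Fin m) F. Suppose there exists a matrix Ā : Matrix (Fin m) (Fin (β + 1)) F such that: (i) every column of G * Ā equals the standard basis vector Pi.single j (1 : F), i.e., (G * Ā) i c = (if i = j then 1 else 0) for all i : Fin n and c : Fin (β + 1); and (ii) the matrix Q : Matrix (Unit ⊕ Fin β) (Fin (β + 1)) F defined by Q (Sum.inl u) c = 1 and Q (Sum.inr r) c = (H * Ā) r c has rank β + 1. Then the vector Sum.elim (Pi.single j (1 : F)) 0 : (Fin n ⊕ Fin β) → F lies in the F-linear span of the set of columns of the stacked matrix T : Matrix (Fin n ⊕ Fin β) (Fin m) F given by T (Sum.inl i) c = G i c and T (Sum.inr r) c = H r c. -/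
/-- The multiple-unicast decoding criterion: if there is a matrix `Abar` whose columns all turn the
source-to-sink transfer matrix `G` into the demanded basis vector `Pi.single j 1`, and such that
the matrix obtained by stacking an all-ones row on top of `H * Abar` has full rank `β + 1`, then
the stacked basis vector `Sum.elim (Pi.single j 1) 0` lies in the span of the columns of the
stacked matrix `[G; H]`. -/
theorem stmt_11 (F : Type*) [Field F] (n m β : ℕ) (j : Fin n)
    (G : Matrix (Fin n) (Fin m) F) (H : Matrix (Fin β) (Fin m) F)
    (h : ∃ Abar : Matrix (Fin m) (Fin (β + 1)) F,
      (∀ (i : Fin n) (c : Fin (β + 1)), (G * Abar) i c = if i = j then 1 else 0) ∧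
      (Matrix.of fun (r : Unit ⊕ Fin β) (c : Fin (β + 1)) =>
          Sum.elim (fun _ : Unit => (1 : F)) (fun r' : Fin β => (H * Abar) r' c) r).rank
        = β + 1) :
    (Sum.elim (Pi.single j (1 : F)) 0 : Fin n ⊕ Fin β → F) ∈
      Submodule.span F (Set.range fun c : Fin m =>
        (Sum.elim (fun i => G i c) (fun r => H r c) : Fin n ⊕ Fin β → F)) := by
  obtain ⟨Abar, hG, hrank⟩ := h
  set Q : Matrix (Unit ⊕ Fin β) (Fin (β + 1)) F :=
    Matrix.of fun r c =>
      Sum.elim (fun _ : Unit => (1 : F)) (fun r' : Fin β => (H * Abar) r' c) r with hQdef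
  have htop : LinearMap.range Q.mulVecLin = ⊤ := by
    apply Submodule.eq_top_of_finrank_eq
    rw [← Matrix.rank, hrank, Module.finrank_pi]
    simp [Nat.add_comm]
  have hmem : (Sum.elim (fun _ : Unit => (1 : F)) (0 : Fin β → F)) ∈
      LinearMap.range Q.mulVecLin := htop ▸ Submodule.mem_top
  obtain ⟨y, hy⟩ := hmem
  rw [Matrix.mulVecLin_apply] at hy
  have hsum : ∑ d, y d = 1 := by
    have := congrFun hy (Sum.inl ())
    simpa [Matrix.mulVec, dotProduct, Q] using this
  have hHz : ∀ r : Fin β, ∑ d, (H * Abar) r d * y d = 0 := by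
    intro r
    have := congrFun hy (Sum.inr r)
    simpa [Matrix.mulVec, dotProduct, Q] using this
  set z : Fin m → F := Abar.mulVec y with hz
  have key : (Sum.elim (Pi.single j (1 : F)) 0 : Fin n ⊕ Fin β → F) =
      ∑ c : Fin m, z c • (Sum.elim (fun i => G i c) (fun r => H r c) : Fin n ⊕ Fin β → F) := by
    funext r
    rw [Finset.sum_apply]
    cases r with
    | inl i =>
      simp only [Pi.smul_apply, Sum.elim_inl, smul_eq_mul]
      have h1 : ∑ c, z c * G i c = ((G * Abar).mulVec y) i := by
        rw [← Matrix.mulVec_mulVec, ← hz]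
        simp [Matrix.mulVec, dotProduct, mul_comm]
      rw [h1]
      simp only [Matrix.mulVec, dotProduct, hG]
      rw [Pi.single_apply]
      by_cases hij : i = j <;> simp [hij, hsum]
    | inr r =>
      simp only [Pi.smul_apply, Sum.elim_inr, smul_eq_mul]
      have h1 : ∑ c, z c * H r c = ((H * Abar).mulVec y) r := by
        rw [← Matrix.mulVec_mulVec, ← hz]
        simp [Matrix.mulVec, dotProduct, mul_comm]
      have h2 : ((H * Abar).mulVec y) r = 0 := by
        simpa [Matrix.mulVec, dotProduct] using hHz r
      simp [h1, h2]
  rw [key]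
  exact Submodule.sum_mem _ fun c _ =>
    Submodule.smul_mem _ _ (Submodule.subset_span ⟨c, rfl⟩)
end
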